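/- Normalisation by evaluation for MQC: every derivable sequent Γ ⊢ p : A of MQC has a derivation Γ ⊢ p' : A where p' is a proof term in normal form. -/

import Mathlib

/-- First-order formulas of minimal predicate logic (MQC), with atomic
formulas drawn from `Atm` and quantification encoded via functions from
individual terms `Trm` (weak HOAS). -/
inductive Fml (Atm Trm : Type) : Type where
  | atom : Atm → Fml Atm Trm
  | and : Fml Atm Trm → Fml Atm Trm → Fml Atm Trm
  | or : Fml Atm Trm → Fml Atm Trm → Fml Atm Trm
  | imp : Fml Atm Trm → Fml Atm Trm → Fml Atm Trm
  | all : (Trm → Fml Atm Trm) → Fml Atm Trm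
  | ex : (Trm → Fml Atm Trm) → Fml Atm Trm

/-- An Intuitionistic Kripke-CPS model. -/
structure IKCPS (Atm Trm : Type) where
  W : Type
  le : W → W → Prop
  le_refl : ∀ w, le w w
  le_trans : ∀ {a b c}, le a b → le b c → le a c
  /-- binary exploding relation between worlds and formulas -/
  explode : W → Fml Atm Trm → Prop
  /-- strong forcing of atomic formulas -/
  satom : W → Atm → Prop
  satom_mono : ∀ {w w' X}, le w w' → satom w X → satom w' X
  Dom : W → Set Trm
  Dom_mono : ∀ {w w'}, le w w' → Dom w ⊆ Dom w'

namespace IKCPS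

variable {Atm Trm : Type}

/-- The continuation ("forcing") monad over a predicate `S` of strong forcing:
`w ⊩ A` iff for all formulas `C`, for all `w' ≥ w`,
`(∀ w'' ≥ w', w'' ⊩ₛ A → w'' ⊩_E C) → w' ⊩_E C`. -/
def fa (M : IKCPS Atm Trm) (S : M.W → Prop) (w : M.W) : Prop :=
  ∀ C : Fml Atm Trm, ∀ w', M.le w w' →
    (∀ w'', M.le w' w'' → S w'' → M.explode w'' C) → M.explode w' C

/-- Strong forcing, extended from atomic to composite formulas. -/
def sforces (M : IKCPS Atm Trm) : Fml Atm Trm → M.W → Prop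
  | .atom X => fun w => M.satom w X
  | .and A B => fun w => M.fa (M.sforces A) w ∧ M.fa (M.sforces B) w
  | .or A B => fun w => M.fa (M.sforces A) w ∨ M.fa (M.sforces B) w
  | .imp A B => fun w => ∀ w', M.le w w' → M.fa (M.sforces A) w' → M.fa (M.sforces B) w'
  | .all A => fun w => ∀ w', M.le w w' → ∀ t ∈ M.Dom w', M.fa (M.sforces (A t)) w'
  | .ex A => fun w => ∃ t ∈ M.Dom w, M.fa (M.sforces (A t)) w

/-- (Non-strong) forcing. -/
def forces (M : IKCPS Atm Trm) (A : Fml Atm Trm) (w : M.W) : Prop :=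
  M.fa (M.sforces A) w

end IKCPS

/-- Natural deduction for minimal intuitionistic predicate logic (MQC).
`Deriv Γ A` states that there is a proof term `p` with `Γ ⊢ p : A`. -/
inductive Deriv {Atm Trm : Type} : List (Fml Atm Trm) → Fml Atm Trm → Prop where
  | ax {Γ A} : A ∈ Γ → Deriv Γ A
  | andI {Γ A B} : Deriv Γ A → Deriv Γ B → Deriv Γ (.and A B)
  | andE1 {Γ A B} : Deriv Γ (.and A B) → Deriv Γ A
  | andE2 {Γ A B} : Deriv Γ (.and A B) → Deriv Γ B
  | orI1 {Γ A B} : Deriv Γ A → Deriv Γ (.or A B)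
  | orI2 {Γ A B} : Deriv Γ B → Deriv Γ (.or A B)
  | orE {Γ A B C} : Deriv Γ (.or A B) → Deriv (A :: Γ) C → Deriv (B :: Γ) C → Deriv Γ C
  | impI {Γ A B} : Deriv (A :: Γ) B → Deriv Γ (.imp A B)
  | impE {Γ A B} : Deriv Γ (.imp A B) → Deriv Γ A → Deriv Γ B
  | allI {Γ A} : (∀ t, Deriv Γ (A t)) → Deriv Γ (.all A)
  | allE {Γ A} (t : Trm) : Deriv Γ (.all A) → Deriv Γ (A t)
  | exI {Γ A} (t : Trm) : Deriv Γ (A t) → Deriv Γ (.ex A)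
  | exE {Γ A C} : Deriv Γ (.ex A) → (∀ t, Deriv (A t :: Γ) C) → Deriv Γ C

/-- Normal (`b = true`) and neutral (`b = false`) natural deduction derivations,
defined simultaneously.  `NND true Γ A` means there is a proof term in normal
form `r` with `Γ ⊢ r : A`; `NND false Γ A` means there is a neutral proof term
`e` with `Γ ⊢ e : A`. -/
inductive NND {Atm Trm : Type} : Bool → List (Fml Atm Trm) → Fml Atm Trm → Prop where
  | ne {Γ A} : NND false Γ A → NND true Γ A
  | ax {Γ A} : A ∈ Γ → NND false Γ A
  | andI {Γ A B} : NND true Γ A → NND true Γ B → NND true Γ (.and A B)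
  | andE1 {Γ A B} : NND false Γ (.and A B) → NND false Γ A
  | andE2 {Γ A B} : NND false Γ (.and A B) → NND false Γ B
  | orI1 {Γ A B} : NND true Γ A → NND true Γ (.or A B)
  | orI2 {Γ A B} : NND true Γ B → NND true Γ (.or A B)
  | orE {Γ A B C} : NND false Γ (.or A B) → NND true (A :: Γ) C → NND true (B :: Γ) C →
      NND false Γ C
  | impI {Γ A B} : NND true (A :: Γ) B → NND true Γ (.imp A B)
  | impE {Γ A B} : NND false Γ (.imp A B) → NND true Γ A → NND false Γ B
  | allI {Γ A} : (∀ t, NND true Γ (A t)) → NND true Γ (.all A)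
  | allE {Γ A} (t : Trm) : NND false Γ (.all A) → NND false Γ (A t)
  | exI {Γ A} (t : Trm) : NND true Γ (A t) → NND true Γ (.ex A)
  | exE {Γ A C} : NND false Γ (.ex A) → (∀ t, NND true (A t :: Γ) C) → NND false Γ C

/-- There is a normal-form derivation `Γ ⊢ r : A`. -/
def NfD {Atm Trm : Type} (Γ : List (Fml Atm Trm)) (A : Fml Atm Trm) : Prop :=
  NND true Γ A

/-- There is a neutral derivation `Γ ⊢ e : A`. -/
def NeD {Atm Trm : Type} (Γ : List (Fml Atm Trm)) (A : Fml Atm Trm) : Prop :=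
  NND false Γ A

theorem NND.weaken {Atm Trm : Type} {b : Bool} {Γ Γ' : List (Fml Atm Trm)}
    {A : Fml Atm Trm} (d : NND b Γ A) (h : Γ ⊆ Γ') : NND b Γ' A := by
  induction d generalizing Γ' with
  | ne _ ih => exact .ne (ih h)
  | ax hm => exact .ax (h hm)
  | andI _ _ ih1 ih2 => exact .andI (ih1 h) (ih2 h)
  | andE1 _ ih => exact .andE1 (ih h)
  | andE2 _ ih => exact .andE2 (ih h)
  | orI1 _ ih => exact .orI1 (ih h)
  | orI2 _ ih => exact .orI2 (ih h)
  | orE _ _ _ ih ih1 ih2 =>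
      exact .orE (ih h) (ih1 (List.cons_subset_cons _ h)) (ih2 (List.cons_subset_cons _ h))
  | impI _ ih => exact .impI (ih (List.cons_subset_cons _ h))
  | impE _ _ ih1 ih2 => exact .impE (ih1 h) (ih2 h)
  | allI _ ih => exact .allI fun t => ih t h
  | allE t _ ih => exact .allE t (ih h)
  | exI t _ ih => exact .exI t (ih h)
  | exE _ _ ih ih2 => exact .exE (ih h) fun t => ih2 t (List.cons_subset_cons _ h)

/-- The universal IK-CPS model: worlds are contexts of MQC ordered by
inclusion, strong forcing of an atom and the exploding relation are given by
normal-form derivability, and the domain of quantification is constant. -/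
def univModel (Atm Trm : Type) : IKCPS Atm Trm where
  W := List (Fml Atm Trm)
  le Γ Γ' := Γ ⊆ Γ'
  le_refl _ := List.Subset.refl _
  le_trans h1 h2 := List.Subset.trans h1 h2
  explode Γ C := NfD Γ C
  satom Γ X := NfD Γ (.atom X)
  satom_mono h d := d.weaken h
  Dom _ := Set.univ
  Dom_mono _ := le_rfl

section NBE

variable {Atm Trm : Type}

/-- Forcing in the universal model. -/
def UForces (A : Fml Atm Trm) (Γ : List (Fml Atm Trm)) : Prop :=
  (univModel Atm Trm).forces A Γ

/-- Strong forcing in the universal model. -/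
def USforces (A : Fml Atm Trm) (Γ : List (Fml Atm Trm)) : Prop :=
  (univModel Atm Trm).sforces A Γ

theorem UForces_def (A : Fml Atm Trm) (Γ : List (Fml Atm Trm)) :
    UForces A Γ ↔ ∀ C : Fml Atm Trm, ∀ Γ', Γ ⊆ Γ' →
      (∀ Γ'', Γ' ⊆ Γ'' → USforces A Γ'' → NfD Γ'' C) → NfD Γ' C :=
  Iff.rfl

theorem UForces.mono {A : Fml Atm Trm} {Γ Γ' : List (Fml Atm Trm)}
    (h : Γ ⊆ Γ') (f : UForces A Γ) : UForces A Γ' :=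
  fun C Δ h2 k => f C Δ (List.Subset.trans h h2) k

theorem USforces.mono : ∀ (A : Fml Atm Trm) {Γ Γ' : List (Fml Atm Trm)},
    Γ ⊆ Γ' → USforces A Γ → USforces A Γ'
  | .atom X, _, _, h, s => NND.weaken s h
  | .and A B, _, _, h, s => ⟨UForces.mono (A := A) h s.1, UForces.mono (A := B) h s.2⟩
  | .or A B, _, _, h, s =>
      s.imp (UForces.mono (A := A) h) (UForces.mono (A := B) h)
  | .imp _ _, _, _, h, s => fun Δ h2 fa => s Δ (List.Subset.trans h h2) fa
  | .all _, _, _, h, s => fun Δ h2 t ht => s Δ (List.Subset.trans h h2) t ht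
  | .ex A, _, _, h, s => ⟨s.choose, trivial, UForces.mono (A := A s.choose) h s.choose_spec.2⟩

theorem UForces.ret {A : Fml Atm Trm} {Γ : List (Fml Atm Trm)}
    (s : USforces A Γ) : UForces A Γ :=
  fun _C Γ' h k => k Γ' (List.Subset.refl _) (USforces.mono A h s)

theorem UForces.bind {A B : Fml Atm Trm} {Γ : List (Fml Atm Trm)}
    (f : UForces A Γ) (g : ∀ Γ', Γ ⊆ Γ' → USforces A Γ' → UForces B Γ') :
    UForces B Γ :=
  fun C Γ' h k => f C Γ' h fun Γ'' h' s =>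
    g Γ'' (List.Subset.trans h h') s C Γ'' (List.Subset.refl _) fun Δ h3 sb => k Δ (List.Subset.trans h' h3) sb

/-- Reification and reflection for the universal model. -/
theorem reify_reflect : ∀ (A : Fml Atm Trm),
    (∀ Γ, UForces A Γ → NfD Γ A) ∧ (∀ Γ, NeD Γ A → UForces A Γ) := by
  intro A
  induction A with
  | atom X =>
    refine ⟨fun Γ f => f (.atom X) Γ (List.Subset.refl _) fun _ _ s => s, ?_⟩
    exact fun Γ e _C Γ' h k => k Γ' (List.Subset.refl _) (NND.ne (e.weaken h))
  | and A B ihA ihB =>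
    constructor
    · intro Γ f
      exact f (.and A B) Γ (List.Subset.refl _) fun Γ'' _ s =>
        NND.andI (ihA.1 Γ'' s.1) (ihB.1 Γ'' s.2)
    · intro Γ e _C Γ' h k
      exact k Γ' (List.Subset.refl _)
        ⟨ihA.2 Γ' (.andE1 (e.weaken h)), ihB.2 Γ' (.andE2 (e.weaken h))⟩
  | or A B ihA ihB =>
    constructor
    · intro Γ f
      exact f (.or A B) Γ (List.Subset.refl _) fun Γ'' _ s =>
        s.elim (fun fa => NND.orI1 (ihA.1 Γ'' fa)) (fun fb => NND.orI2 (ihB.1 Γ'' fb))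
    · intro Γ e C Γ' h k
      refine NND.ne (NND.orE (e.weaken h) ?_ ?_)
      · exact k (A :: Γ') (List.subset_cons_self _ _)
          (Or.inl (ihA.2 _ (.ax List.mem_cons_self)))
      · exact k (B :: Γ') (List.subset_cons_self _ _)
          (Or.inr (ihB.2 _ (.ax List.mem_cons_self)))
  | imp A B ihA ihB =>
    constructor
    · intro Γ f
      refine f (.imp A B) Γ (List.Subset.refl _) fun Γ'' _ s => ?_
      refine NND.impI (ihB.1 (A :: Γ'') ?_)
      exact s (A :: Γ'') (List.subset_cons_self _ _) (ihA.2 _ (.ax List.mem_cons_self))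
    · intro Γ e _C Γ' h k
      refine k Γ' (List.Subset.refl _) fun Δ h' fa => ?_
      exact ihB.2 Δ (.impE (e.weaken (List.Subset.trans h h')) (ihA.1 Δ fa))
  | all A ih =>
    constructor
    · intro Γ f
      exact f (.all A) Γ (List.Subset.refl _) fun Γ'' _ s =>
        NND.allI fun t => (ih t).1 Γ'' (s Γ'' (List.Subset.refl _) t trivial)
    · intro Γ e _C Γ' h k
      refine k Γ' (List.Subset.refl _) fun Δ h' t _ => ?_
      exact (ih t).2 Δ (.allE t (e.weaken (List.Subset.trans h h')))
  | ex A ih =>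
    constructor
    · intro Γ f
      exact f (.ex A) Γ (List.Subset.refl _) fun Γ'' _ s =>
        NND.exI s.choose ((ih s.choose).1 Γ'' s.choose_spec.2)
    · intro Γ e C Γ' h k
      refine NND.ne (NND.exE (e.weaken h) fun t => ?_)
      exact k (A t :: Γ') (List.subset_cons_self _ _)
        ⟨t, trivial, (ih t).2 _ (.ax List.mem_cons_self)⟩

/-- Soundness with respect to the universal model. -/
theorem soundness {Γ : List (Fml Atm Trm)} {A : Fml Atm Trm} (d : Deriv Γ A) :
    ∀ Δ, (∀ B ∈ Γ, UForces B Δ) → UForces A Δ := by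
  induction d with
  | ax hm => exact fun Δ ρ => ρ _ hm
  | andI _ _ ih1 ih2 => exact fun Δ ρ => UForces.ret ⟨ih1 Δ ρ, ih2 Δ ρ⟩
  | andE1 _ ih => exact fun Δ ρ => UForces.bind (ih Δ ρ) fun _ _ s => s.1
  | andE2 _ ih => exact fun Δ ρ => UForces.bind (ih Δ ρ) fun _ _ s => s.2
  | orI1 _ ih => exact fun Δ ρ => UForces.ret (Or.inl (ih Δ ρ))
  | orI2 _ ih => exact fun Δ ρ => UForces.ret (Or.inr (ih Δ ρ))
  | orE _ _ _ ih ih1 ih2 =>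
    intro Δ ρ
    refine UForces.bind (ih Δ ρ) fun Δ' h s => ?_
    rcases s with fa | fb
    · exact ih1 Δ' fun B hB => by
        rcases List.mem_cons.mp hB with rfl | hB
        · exact fa
        · exact (ρ B hB).mono h
    · exact ih2 Δ' fun B hB => by
        rcases List.mem_cons.mp hB with rfl | hB
        · exact fb
        · exact (ρ B hB).mono h
  | impI _ ih =>
    intro Δ ρ
    refine UForces.ret fun Δ' h fa => ih Δ' fun B hB => ?_
    rcases List.mem_cons.mp hB with rfl | hB
    · exact fa
    · exact (ρ B hB).mono h
  | impE _ _ ih1 ih2 =>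
    intro Δ ρ
    refine UForces.bind (ih1 Δ ρ) fun Δ' h s => ?_
    exact s Δ' (List.Subset.refl _) ((ih2 Δ ρ).mono h)
  | allI _ ih =>
    intro Δ ρ
    exact UForces.ret fun Δ' h t _ => ih t Δ' fun B hB => (ρ B hB).mono h
  | allE t _ ih =>
    intro Δ ρ
    exact UForces.bind (ih Δ ρ) fun Δ' _ s => s Δ' (List.Subset.refl _) t trivial
  | exI t _ ih => exact fun Δ ρ => UForces.ret ⟨t, trivial, ih Δ ρ⟩
  | exE _ _ ih ih2 =>
    intro Δ ρ
    refine UForces.bind (ih Δ ρ) fun Δ' h s => ?_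
    rcases s with ⟨t, -, fa⟩
    refine ih2 t Δ' fun B hB => ?_
    rcases List.mem_cons.mp hB with rfl | hB
    · exact fa
    · exact (ρ B hB).mono h

end NBE

/-- Normalisation by evaluation for MQC: every derivable sequent
has a derivation by a proof term in normal form. -/
theorem nbe {Atm Trm : Type} (Γ : List (Fml Atm Trm)) (A : Fml Atm Trm)
    (d : Deriv Γ A) : NfD Γ A :=
  (reify_reflect A).1 Γ
    (soundness d Γ fun B hB => (reify_reflect B).2 Γ (NND.ax hB))
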